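/- The value φ^α defined by φ^α_i(v) = (1/|N|!) Σ_{π∈Ω(N)} Σ_{P∈𝒫} pr^α_π(P)·[v(C_i^π ∪ {i}, P_{[C_i^π∪{i}]}) − v(C_i^π, P_{[C_i^π]})] satisfies Efficiency: Σ_{i∈N} φ^α_i(v) = v(N, {N}) for every partition-function game v. -/

import Mathlib

open Finset

open scoped Classical

/-- A partition of the player set `Fin n`; following the paper's convention,
`∅` is a member of every partition. -/
def IsPartition {n : ℕ} (P : Finset (Finset (Fin n))) : Prop :=
  ∅ ∈ P ∧ ∀ a : Fin n, ∃! B : Finset (Fin n), B ∈ P ∧ a ∈ B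

/-- The set `𝒫` of all partitions of `Fin n`. -/
noncomputable def allPartitions (n : ℕ) : Finset (Finset (Finset (Fin n))) :=
  Finset.univ.filter IsPartition

/-- `C_i^π`: the set of players appearing after `i` in the ordering `π`. -/
def Cafter {n : ℕ} (π : Equiv.Perm (Fin n)) (i : Fin n) : Finset (Fin n) :=
  Finset.univ.filter fun j => π.symm i < π.symm j

/-- `P_{[S]}` : the partition obtained from `P` by merging all members of `S`
into a single coalition. -/
def pmerge {n : ℕ} (P : Finset (Finset (Fin n))) (S : Finset (Fin n)) :
    Finset (Finset (Fin n)) :=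
  P.image (· \ S) ∪ {S}

/-- `τ_i^T(P)` : the partition obtained from `P` by transferring `i` from its
coalition to the coalition `T` (taking `T = ∅` means that `i` forms a new
singleton coalition). -/
def moveTo {n : ℕ} (P : Finset (Finset (Fin n))) (i : Fin n) (T : Finset (Fin n)) :
    Finset (Finset (Fin n)) :=
  ((P.erase T).image fun B => B.erase i) ∪ {insert i T} ∪ {∅}

/-- A partition-function game: a real value for every (embedded) coalition. -/
abbrev Game (n : ℕ) := Finset (Fin n) → Finset (Finset (Fin n)) → ℝ

/-- A system of weights `α_i(S, P)` (meaningful for `i ∉ S`). -/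
abbrev Weights (n : ℕ) := Fin n → Finset (Fin n) → Finset (Finset (Fin n)) → ℝ

/-- The partition `{N, ∅}` in which the grand coalition is embedded. -/
def grandPart (n : ℕ) : Finset (Finset (Fin n)) := {Finset.univ, ∅}

/-- Normalization: for every embedded coalition `(S, P)` with `i ∈ S`,
`∑_{T ∈ P_{−S}} α_i(S_{−i}, τ_i^T(P)) = 1`. -/
def Normalized {n : ℕ} (w : Weights n) : Prop :=
  ∀ (i : Fin n) (S : Finset (Fin n)) (P : Finset (Finset (Fin n))),
    IsPartition P → S ∈ P → i ∈ S →
      ∑ T ∈ P.erase S, w i (S.erase i) (moveTo P i T) = 1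

/-- Weights take values in `[0, 1]`. -/
def InRange {n : ℕ} (w : Weights n) : Prop :=
  ∀ (i : Fin n) (S : Finset (Fin n)) (P : Finset (Finset (Fin n))),
    i ∉ S → 0 ≤ w i S P ∧ w i S P ≤ 1

/-- `pr^α_π(P) = ∏_{i ∈ N} α_i(C_i^π, P_{[C_i^π]})`. -/
noncomputable def pr {n : ℕ} (w : Weights n) (π : Equiv.Perm (Fin n))
    (P : Finset (Finset (Fin n))) : ℝ :=
  ∏ i : Fin n, w i (Cafter π i) (pmerge P (Cafter π i))

/-- The extended Shapley value `φ^α` (formula (1) of the paper). -/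
noncomputable def esv {n : ℕ} (w : Weights n) (v : Game n) (i : Fin n) : ℝ :=
  ((n.factorial : ℝ))⁻¹ * ∑ π : Equiv.Perm (Fin n), ∑ P ∈ allPartitions n,
    pr w π P *
      (v (insert i (Cafter π i)) (pmerge P (insert i (Cafter π i))) -
        v (Cafter π i) (pmerge P (Cafter π i)))

/-- The `α`-marginal contribution `[mc^α_i(v)](S, P)`. -/
noncomputable def mc {n : ℕ} (w : Weights n) (v : Game n) (i : Fin n)
    (S : Finset (Fin n)) (P : Finset (Finset (Fin n))) : ℝ :=
  ∑ T ∈ P.erase S, w i (S.erase i) (moveTo P i T) * (v S P - v (S.erase i) (moveTo P i T))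

/-- A genuine partition-function game: it vanishes off embedded coalitions
(and on the empty coalition). -/
def IsGame {n : ℕ} (v : Game n) : Prop :=
  ∀ S P, ¬ (IsPartition P ∧ S ∈ P ∧ S ≠ ∅) → v S P = 0

/-- The simple game `e^{(S₀, P₀)}`. -/
noncomputable def sgame {n : ℕ} (S₀ : Finset (Fin n)) (P₀ : Finset (Finset (Fin n))) :
    Game n :=
  fun S P => if S = S₀ ∧ P = P₀ then 1 else 0

/-- The permuted game `π(v)`, with `π(v)(S, P) = v(π(S), π(P))`. -/
def permGame {n : ℕ} (π : Equiv.Perm (Fin n)) (v : Game n) : Game n :=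
  fun S P => v (S.image π) (P.image (Finset.image π))

section Aux
variable {n : ℕ}

lemma IsPartition.unique {P : Finset (Finset (Fin n))} (hP : IsPartition P)
    {B C : Finset (Fin n)} {a : Fin n} (hB : B ∈ P) (hC : C ∈ P) (haB : a ∈ B)
    (haC : a ∈ C) : B = C := by
  obtain ⟨-, h⟩ := hP
  obtain ⟨D, -, hD⟩ := h a
  rw [hD B ⟨hB, haB⟩, hD C ⟨hC, haC⟩]

lemma mem_allPartitions {P : Finset (Finset (Fin n))} :
    P ∈ allPartitions n ↔ IsPartition P := by
  simp [allPartitions]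

/-- the block of `P` containing `i` (junk if not a partition). -/
def blockOf (P : Finset (Finset (Fin n))) (i : Fin n) : Finset (Fin n) :=
  Finset.univ.filter fun x => ∃ B ∈ P, i ∈ B ∧ x ∈ B

lemma blockOf_eq {P : Finset (Finset (Fin n))} (hP : IsPartition P)
    {B : Finset (Fin n)} {i : Fin n} (hB : B ∈ P) (hi : i ∈ B) :
    blockOf P i = B := by
  ext x
  simp only [blockOf, mem_filter, mem_univ, true_and]
  constructor
  · rintro ⟨C, hC, hiC, hxC⟩
    rwa [hP.unique hB hC hi hiC]
  · exact fun hx => ⟨B, hB, hi, hx⟩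

lemma blockOf_mem {P : Finset (Finset (Fin n))} (hP : IsPartition P) (i : Fin n) :
    blockOf P i ∈ P ∧ i ∈ blockOf P i := by
  obtain ⟨B, ⟨hB, hiB⟩, -⟩ := hP.2 i
  rw [blockOf_eq hP hB hiB]; exact ⟨hB, hiB⟩

lemma mem_pmerge {P : Finset (Finset (Fin n))} {S C : Finset (Fin n)} :
    C ∈ pmerge P S ↔ (∃ B ∈ P, B \ S = C) ∨ C = S := by
  simp [pmerge]; exact or_comm

lemma self_mem_pmerge {P : Finset (Finset (Fin n))} {S : Finset (Fin n)} :
    S ∈ pmerge P S := by simp [pmerge]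

lemma pmerge_isPartition {P : Finset (Finset (Fin n))} (hP : IsPartition P)
    (S : Finset (Fin n)) : IsPartition (pmerge P S) := by
  constructor
  · exact mem_pmerge.2 (Or.inl ⟨∅, hP.1, by simp⟩)
  · intro a
    by_cases haS : a ∈ S
    · refine ⟨S, ⟨self_mem_pmerge, haS⟩, ?_⟩
      rintro C ⟨hC, haC⟩
      rcases mem_pmerge.1 hC with ⟨B, hB, rfl⟩ | rfl
      · exact absurd (Finset.mem_sdiff.1 haC).2 (not_not.2 haS)
      · rfl
    · obtain ⟨B, ⟨hB, haB⟩, -⟩ := hP.2 a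
      refine ⟨B \ S, ⟨mem_pmerge.2 (Or.inl ⟨B, hB, rfl⟩), Finset.mem_sdiff.2 ⟨haB, haS⟩⟩, ?_⟩
      rintro C ⟨hC, haC⟩
      rcases mem_pmerge.1 hC with ⟨B', hB', rfl⟩ | rfl
      · rw [hP.unique hB' hB (Finset.mem_sdiff.1 haC).1 haB]
      · exact absurd haC haS

lemma pmerge_of_mem {P : Finset (Finset (Fin n))} (hP : IsPartition P)
    {S : Finset (Fin n)} (hS : S ∈ P) : pmerge P S = P := by
  ext C
  rw [mem_pmerge]
  constructor
  · rintro (⟨B, hB, rfl⟩ | rfl)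
    · rcases eq_or_ne B S with rfl | hBS
      · simpa using hP.1
      · have : B \ S = B := by
          apply Finset.sdiff_eq_self_of_disjoint
          rw [Finset.disjoint_left]
          intro x hxB hxS
          exact hBS (hP.unique hB hS hxB hxS)
        rwa [this]
    · exact hS
  · intro hC
    rcases eq_or_ne C S with rfl | hCS
    · exact Or.inr rfl
    · refine Or.inl ⟨C, hC, Finset.sdiff_eq_self_of_disjoint ?_⟩
      rw [Finset.disjoint_left]
      intro x hxC hxS
      exact hCS (hP.unique hC hS hxC hxS)

lemma sdiff_sdiff_of_subset' {B S T : Finset (Fin n)} (hST : S ⊆ T) :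
    (B \ S) \ T = B \ T := by
  ext x
  simp only [Finset.mem_sdiff]
  exact ⟨fun h => ⟨h.1.1, h.2⟩, fun h => ⟨⟨h.1, fun hx => h.2 (hST hx)⟩, h.2⟩⟩

lemma pmerge_pmerge {P : Finset (Finset (Fin n))} (h0 : ∅ ∈ P)
    {S T : Finset (Fin n)} (hST : S ⊆ T) :
    pmerge (pmerge P S) T = pmerge P T := by
  ext C
  simp only [mem_pmerge]
  constructor
  · rintro (⟨B, hB, rfl⟩ | rfl)
    · rcases hB with ⟨D, hD, rfl⟩ | rfl
      · exact Or.inl ⟨D, hD, (sdiff_sdiff_of_subset' hST).symm⟩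
      · exact Or.inl ⟨∅, h0, by simp [Finset.sdiff_eq_empty_iff_subset.2 hST]⟩
    · exact Or.inr rfl
  · rintro (⟨B, hB, rfl⟩ | rfl)
    · exact Or.inl ⟨B \ S, Or.inl ⟨B, hB, rfl⟩, sdiff_sdiff_of_subset' hST⟩
    · exact Or.inr rfl

end Aux
section Aux2
variable {n : ℕ}

lemma pmerge_univ {P : Finset (Finset (Fin n))} (h0 : ∅ ∈ P) :
    pmerge P Finset.univ = grandPart n := by
  ext C
  simp only [mem_pmerge, grandPart, Finset.mem_insert, Finset.mem_singleton]
  constructor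
  · rintro (⟨B, hB, rfl⟩ | rfl)
    · simp
    · simp
  · rintro (rfl | rfl)
    · exact Or.inr rfl
    · exact Or.inl ⟨∅, h0, by simp⟩

lemma grandPart_isPartition : IsPartition (grandPart n) := by
  constructor
  · simp [grandPart]
  · intro a
    refine ⟨Finset.univ, by simp [grandPart], ?_⟩
    rintro B ⟨hB, haB⟩
    rcases Finset.mem_insert.1 hB with rfl | hB
    · rfl
    · simp only [Finset.mem_singleton] at hB
      subst hB
      exact absurd haB (Finset.notMem_empty a)

lemma eq_grandPart {Q : Finset (Finset (Fin n))} (hQ : IsPartition Q)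
    (hu : Finset.univ ∈ Q) : Q = grandPart n := by
  ext C
  simp only [grandPart, Finset.mem_insert, Finset.mem_singleton]
  constructor
  · intro hC
    rcases Finset.eq_empty_or_nonempty C with rfl | ⟨a, ha⟩
    · exact Or.inr rfl
    · exact Or.inl (hQ.unique hC hu ha (Finset.mem_univ a))
  · rintro (rfl | rfl)
    · exact hu
    · exact hQ.1

/-- `S_k`: players at positions `≥ k` in the ordering `π`. -/
def Sset (π : Equiv.Perm (Fin n)) (k : ℕ) : Finset (Fin n) :=
  Finset.univ.filter fun j => k ≤ (π.symm j : ℕ)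

lemma Sset_zero (π : Equiv.Perm (Fin n)) : Sset π 0 = Finset.univ := by
  simp [Sset]

lemma Sset_top (π : Equiv.Perm (Fin n)) : Sset π n = ∅ := by
  ext x; simp only [Sset, Finset.mem_filter, Finset.mem_univ, true_and,
    Finset.notMem_empty, iff_false, not_le]
  exact (π.symm x).2

lemma Sset_antitone (π : Equiv.Perm (Fin n)) {k l : ℕ} (h : k ≤ l) :
    Sset π l ⊆ Sset π k := fun x hx => by
  simp only [Sset, Finset.mem_filter, Finset.mem_univ, true_and] at hx ⊢
  omega

lemma Cafter_eq (π : Equiv.Perm (Fin n)) (k : Fin n) :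
    Cafter π (π k) = Sset π (k + 1) := by
  ext x
  simp only [Cafter, Sset, Finset.mem_filter, Finset.mem_univ, true_and,
    Equiv.symm_apply_apply, Fin.lt_def]
  omega

lemma not_mem_Sset (π : Equiv.Perm (Fin n)) (k : Fin n) :
    π k ∉ Sset π (k + 1) := by
  simp [Sset]

lemma insert_Sset (π : Equiv.Perm (Fin n)) (k : Fin n) :
    insert (π k) (Sset π (k + 1)) = Sset π k := by
  ext x
  simp only [Finset.mem_insert, Sset, Finset.mem_filter, Finset.mem_univ, true_and]
  constructor
  · rintro (rfl | h)
    · simp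
    · omega
  · intro h
    rcases eq_or_lt_of_le h with he | hl
    · left
      have : π.symm x = k := Fin.ext he.symm
      rw [← this, Equiv.apply_symm_apply]
    · right; omega

end Aux2
section Aux3
variable {n : ℕ}

lemma mem_moveTo {P : Finset (Finset (Fin n))} {i : Fin n} {T C : Finset (Fin n)} :
    C ∈ moveTo P i T ↔ (∃ B ∈ P.erase T, B.erase i = C) ∨ C = insert i T ∨ C = ∅ := by
  simp [moveTo, or_assoc]; exact or_rotate.symm

lemma IsPartition.sdiff_self {Q : Finset (Finset (Fin n))} (hQ : IsPartition Q)
    {B C : Finset (Fin n)} (hB : B ∈ Q) (hC : C ∈ Q) (hne : B ≠ C) : B \ C = B :=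
  Finset.sdiff_eq_self_of_disjoint (Finset.disjoint_left.2
    fun _ hxB hxC => hne (hQ.unique hB hC hxB hxC))

lemma IsPartition.not_mem {Q : Finset (Finset (Fin n))} (hQ : IsPartition Q)
    {B C : Finset (Fin n)} {a : Fin n} (hB : B ∈ Q) (hC : C ∈ Q) (hne : B ≠ C)
    (ha : a ∈ B) : a ∉ C := fun h => hne (hQ.unique hB hC ha h)

variable {Q : Finset (Finset (Fin n))} {S T : Finset (Fin n)} {i : Fin n}

lemma moveTo_isPartition (hQ : IsPartition Q) (hS : S ∈ Q) (hiS : i ∈ S)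
    (hT : T ∈ Q.erase S) : IsPartition (moveTo Q i T) := by
  have hTQ : T ∈ Q := Finset.mem_of_mem_erase hT
  have hTS : T ≠ S := Finset.ne_of_mem_erase hT
  constructor
  · exact mem_moveTo.2 (Or.inr (Or.inr rfl))
  · intro a
    by_cases ha : a ∈ insert i T
    · refine ⟨insert i T, ⟨mem_moveTo.2 (Or.inr (Or.inl rfl)), ha⟩, ?_⟩
      rintro C ⟨hC, haC⟩
      rcases mem_moveTo.1 hC with ⟨B, hB, rfl⟩ | rfl | rfl
      · have hBQ : B ∈ Q := Finset.mem_of_mem_erase hB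
        have hBT : B ≠ T := Finset.ne_of_mem_erase hB
        have haB : a ∈ B := Finset.mem_of_mem_erase haC
        have hai : a ≠ i := Finset.ne_of_mem_erase haC
        rcases Finset.mem_insert.1 ha with rfl | haT
        · exact absurd rfl hai
        · exact absurd (hQ.unique hBQ hTQ haB haT) hBT
      · rfl
      · exact absurd haC (Finset.notMem_empty a)
    · have hai : a ≠ i := fun h => ha (by simp [h])
      have haT : a ∉ T := fun h => ha (Finset.mem_insert_of_mem h)
      obtain ⟨hBQ, haB⟩ := blockOf_mem hQ a
      set B := blockOf Q a with hBdef
      have hBT : B ≠ T := fun h => haT (h ▸ haB)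
      refine ⟨B.erase i, ⟨mem_moveTo.2 (Or.inl ⟨B, Finset.mem_erase.2 ⟨hBT, hBQ⟩, rfl⟩),
        Finset.mem_erase.2 ⟨hai, haB⟩⟩, ?_⟩
      rintro C ⟨hC, haC⟩
      rcases mem_moveTo.1 hC with ⟨B', hB', rfl⟩ | rfl | rfl
      · have : B' = B := hQ.unique (Finset.mem_of_mem_erase hB') hBQ
          (Finset.mem_of_mem_erase haC) haB
        rw [this]
      · exact absurd haC ha
      · exact absurd haC (Finset.notMem_empty a)

lemma erase_mem_moveTo (hS : S ∈ Q) (hiS : i ∈ S) (hT : T ∈ Q.erase S) :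
    S.erase i ∈ moveTo Q i T :=
  mem_moveTo.2 (Or.inl ⟨S, Finset.mem_erase.2 ⟨fun h => Finset.ne_of_mem_erase hT h.symm, hS⟩, rfl⟩)

lemma pmerge_moveTo (hQ : IsPartition Q) (hS : S ∈ Q) (hiS : i ∈ S)
    (hT : T ∈ Q.erase S) : pmerge (moveTo Q i T) S = Q := by
  have hTQ : T ∈ Q := Finset.mem_of_mem_erase hT
  have hTS : T ≠ S := Finset.ne_of_mem_erase hT
  have hiT : i ∉ T := hQ.not_mem hS hTQ (Ne.symm hTS) hiS
  have hins : insert i T \ S = T := by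
    ext x
    simp only [Finset.mem_sdiff, Finset.mem_insert]
    constructor
    · rintro ⟨rfl | hxT, hxS⟩
      · exact absurd hiS hxS
      · exact hxT
    · intro hx
      exact ⟨Or.inr hx, hQ.not_mem hTQ hS hTS hx⟩
  ext C
  rw [mem_pmerge]
  constructor
  · rintro (⟨D, hD, rfl⟩ | rfl)
    · rcases mem_moveTo.1 hD with ⟨B, hB, rfl⟩ | rfl | rfl
      · have hBQ : B ∈ Q := Finset.mem_of_mem_erase hB
        rcases eq_or_ne B S with h | hBS
        · subst h
          have : B.erase i \ B = ∅ := by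
            rw [Finset.sdiff_eq_empty_iff_subset]
            exact (Finset.erase_subset _ _)
          rw [this]; exact hQ.1
        · have hiB : i ∉ B := hQ.not_mem hS hBQ (Ne.symm hBS) hiS
          rw [Finset.erase_eq_self.2 hiB, hQ.sdiff_self hBQ hS hBS]
          exact hBQ
      · rw [hins]; exact hTQ
      · simpa using hQ.1
    · exact hS
  · intro hC
    rcases eq_or_ne C S with rfl | hCS
    · exact Or.inr rfl
    · rcases eq_or_ne C T with rfl | hCT
      · exact Or.inl ⟨insert i C, mem_moveTo.2 (Or.inr (Or.inl rfl)), hins⟩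
      · have hiC : i ∉ C := hQ.not_mem hS hC (Ne.symm hCS) hiS
        refine Or.inl ⟨C, mem_moveTo.2 (Or.inl ⟨C, Finset.mem_erase.2 ⟨hCT, hC⟩,
          Finset.erase_eq_self.2 hiC⟩), hQ.sdiff_self hC hS hCS⟩

lemma blockOf_moveTo (hQ : IsPartition Q) (hS : S ∈ Q) (hiS : i ∈ S)
    (hT : T ∈ Q.erase S) : blockOf (moveTo Q i T) i = insert i T :=
  blockOf_eq (moveTo_isPartition hQ hS hiS hT)
    (mem_moveTo.2 (Or.inr (Or.inl rfl))) (Finset.mem_insert_self i T)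

end Aux3
section Aux4
variable {n : ℕ} {Q : Finset (Finset (Fin n))} {R : Finset (Fin n)} {i : Fin n}

lemma sdiff_insert_eq_self {E R : Finset (Fin n)} {i : Fin n} (hiE : i ∉ E)
    (hdisj : ∀ x ∈ E, x ∉ R) : E \ insert i R = E := by
  ext x
  simp only [Finset.mem_sdiff, Finset.mem_insert]
  constructor
  · exact fun h => h.1
  · intro hx
    refine ⟨hx, ?_⟩
    rintro (rfl | h)
    · exact hiE hx
    · exact hdisj x hx h

lemma blockOf_sdiff (hQ : IsPartition Q) (hR : R ∈ Q) (hiR : i ∉ R) :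
    blockOf Q i \ insert i R = (blockOf Q i).erase i := by
  obtain ⟨hBQ, hiB⟩ := blockOf_mem hQ i
  have hBR : blockOf Q i ≠ R := fun h => hiR (h ▸ hiB)
  ext x
  simp only [Finset.mem_sdiff, Finset.mem_insert, Finset.mem_erase]
  constructor
  · intro ⟨hxB, hx⟩
    exact ⟨fun h => hx (Or.inl h), hxB⟩
  · intro ⟨hxi, hxB⟩
    refine ⟨hxB, ?_⟩
    rintro (rfl | h)
    · exact hxi rfl
    · exact hQ.not_mem hBQ hR hBR hxB h

lemma blockOf_erase_mem (hQ : IsPartition Q) (hR : R ∈ Q) (hiR : i ∉ R) :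
    (blockOf Q i).erase i ∈ (pmerge Q (insert i R)).erase (insert i R) := by
  obtain ⟨hBQ, hiB⟩ := blockOf_mem hQ i
  refine Finset.mem_erase.2 ⟨?_, ?_⟩
  · intro h
    exact (Finset.notMem_erase i _) (h ▸ Finset.mem_insert_self i R)
  · exact mem_pmerge.2 (Or.inl ⟨blockOf Q i, hBQ, blockOf_sdiff hQ hR hiR⟩)

lemma moveTo_pmerge (hQ : IsPartition Q) (hR : R ∈ Q) (hiR : i ∉ R) :
    moveTo (pmerge Q (insert i R)) i ((blockOf Q i).erase i) = Q := by
  obtain ⟨hBQ, hiB⟩ := blockOf_mem hQ i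
  set B := blockOf Q i with hBdef
  set S := insert i R with hSdef
  set T := B.erase i with hTdef
  have hBR : B ≠ R := fun h => hiR (h ▸ hiB)
  have hiT : i ∉ T := Finset.notMem_erase i B
  have hST : S ≠ T := fun h => hiT (h ▸ Finset.mem_insert_self i R)
  ext C
  rw [mem_moveTo]
  constructor
  · rintro (⟨D, hD, rfl⟩ | rfl | rfl)
    · have hDP : D ∈ pmerge Q S := Finset.mem_of_mem_erase hD
      have hDT : D ≠ T := Finset.ne_of_mem_erase hD
      rcases mem_pmerge.1 hDP with ⟨E, hE, rfl⟩ | rfl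
      · rcases eq_or_ne E B with rfl | hEB
        · exact absurd (blockOf_sdiff hQ hR hiR) hDT
        · rcases eq_or_ne E R with rfl | hER
          · have : E \ S = ∅ := by
              rw [Finset.sdiff_eq_empty_iff_subset, hSdef]
              exact Finset.subset_insert _ _
            rw [this]
            simpa using hQ.1
          · have hiE : i ∉ E := fun h => hEB (hQ.unique hE hBQ h hiB)
            have : E \ S = E :=
              sdiff_insert_eq_self hiE (fun x hx => hQ.not_mem hE hR hER hx)
            rw [this, Finset.erase_eq_self.2 hiE]
            exact hE
      · rw [hSdef, Finset.erase_insert hiR]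
        exact hR
    · rw [hTdef, Finset.insert_erase hiB]
      exact hBQ
    · exact hQ.1
  · intro hC
    rcases eq_or_ne C B with rfl | hCB
    · exact Or.inr (Or.inl (by rw [hTdef, Finset.insert_erase hiB]))
    rcases eq_or_ne C R with rfl | hCR
    · refine Or.inl ⟨S, Finset.mem_erase.2 ⟨hST, self_mem_pmerge⟩, ?_⟩
      rw [hSdef, Finset.erase_insert hiR]
    rcases eq_or_ne C ∅ with rfl | hC0
    · exact Or.inr (Or.inr rfl)
    · have hCT : C ≠ T := by
        intro h
        obtain ⟨x, hx⟩ := Finset.nonempty_of_ne_empty hC0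
        have hxB : x ∈ B := Finset.mem_of_mem_erase (h ▸ hx)
        exact hCB (hQ.unique hC hBQ hx hxB)
      have hiC : i ∉ C := fun h => hCB (hQ.unique hC hBQ h hiB)
      have hCS : C \ S = C :=
        sdiff_insert_eq_self hiC (fun x hx => hQ.not_mem hC hR hCR hx)
      exact Or.inl ⟨C, Finset.mem_erase.2 ⟨hCT, mem_pmerge.2 (Or.inl ⟨C, hC, hCS⟩)⟩,
        Finset.erase_eq_self.2 hiC⟩

end Aux4
section Key
variable {n : ℕ}

lemma key_aux (w : Weights n) (hnorm : Normalized w) (π : Equiv.Perm (Fin n)) :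
    ∀ k, k ≤ n →
      ∑ Q ∈ (allPartitions n).filter (fun Q => Sset π k ∈ Q),
        ∏ j ∈ Finset.univ.filter (fun j : Fin n => (j : ℕ) < k),
          w (π j) (Sset π ((j : ℕ) + 1)) (pmerge Q (Sset π ((j : ℕ) + 1))) = 1 := by
  intro k
  induction k with
  | zero =>
    intro _
    have h1 : (Finset.univ.filter fun j : Fin n => (j : ℕ) < 0) = ∅ := by
      ext j; simp
    have h2 : (allPartitions n).filter (fun Q => Sset π 0 ∈ Q) = {grandPart n} := by
      ext Q
      simp only [Finset.mem_filter, mem_allPartitions, Finset.mem_singleton, Sset_zero]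
      constructor
      · rintro ⟨hQ, hu⟩
        exact eq_grandPart hQ hu
      · rintro rfl
        exact ⟨grandPart_isPartition, by simp [grandPart]⟩
    rw [h1, h2]
    simp
  | succ k ih =>
    intro hk1
    have hk : k < n := hk1
    have ihv := ih (le_of_lt hk)
    set kF : Fin n := ⟨k, hk⟩ with hkF
    set i : Fin n := π kF with hidef
    set R : Finset (Fin n) := Sset π (k + 1) with hRdef
    set S : Finset (Fin n) := Sset π k with hSdef
    have hSR : insert i R = S := by
      rw [hidef, hRdef, hSdef]
      exact insert_Sset π kF
    have hiR : i ∉ R := not_mem_Sset π kF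
    -- split off the j = kF factor
    have hfil : (Finset.univ.filter fun j : Fin n => (j : ℕ) < k + 1)
        = insert kF (Finset.univ.filter fun j : Fin n => (j : ℕ) < k) := by
      ext j
      simp only [Finset.mem_filter, Finset.mem_univ, true_and, Finset.mem_insert]
      constructor
      · intro h
        rcases Nat.lt_succ_iff_lt_or_eq.1 h with h | h
        · exact Or.inr (by simpa using h)
        · exact Or.inl (Fin.ext h)
      · rintro (rfl | h)
        · exact Nat.lt_succ_self k
        · exact Nat.lt_succ_of_lt h
    have hkFnot : kF ∉ Finset.univ.filter fun j : Fin n => (j : ℕ) < k := by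
      simp [hkF]
    have step1 : ∀ Q ∈ (allPartitions n).filter (fun Q => R ∈ Q),
        (∏ j ∈ Finset.univ.filter fun j : Fin n => (j : ℕ) < k + 1,
          w (π j) (Sset π ((j : ℕ) + 1)) (pmerge Q (Sset π ((j : ℕ) + 1))))
        = w i R Q * ∏ j ∈ Finset.univ.filter fun j : Fin n => (j : ℕ) < k,
            w (π j) (Sset π ((j : ℕ) + 1)) (pmerge Q (Sset π ((j : ℕ) + 1))) := by
      intro Q hQ'
      rw [Finset.mem_filter] at hQ'
      obtain ⟨hQP, hRQ⟩ := hQ'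
      have hQ := mem_allPartitions.1 hQP
      rw [hfil, Finset.prod_insert hkFnot]
      congr 1
      show w (π kF) (Sset π (k + 1)) (pmerge Q (Sset π (k + 1))) = w i R Q
      rw [← hidef, ← hRdef, pmerge_of_mem hQ hRQ]
    rw [Finset.sum_congr rfl step1]
    -- bijection with pairs (Q', T)
    have hbij :
        ∑ Q ∈ (allPartitions n).filter (fun Q => R ∈ Q),
          (w i R Q * ∏ j ∈ Finset.univ.filter fun j : Fin n => (j : ℕ) < k,
            w (π j) (Sset π ((j : ℕ) + 1)) (pmerge Q (Sset π ((j : ℕ) + 1))))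
        = ∑ p ∈ ((allPartitions n).filter (fun Q' => S ∈ Q')).sigma
            (fun Q' => Q'.erase S),
            (w i R (moveTo p.1 i p.2) *
              ∏ j ∈ Finset.univ.filter fun j : Fin n => (j : ℕ) < k,
                w (π j) (Sset π ((j : ℕ) + 1)) (pmerge p.1 (Sset π ((j : ℕ) + 1)))) := by
      refine Finset.sum_nbij' (fun Q => ⟨pmerge Q S, (blockOf Q i).erase i⟩)
        (fun p => moveTo p.1 i p.2) ?_ ?_ ?_ ?_ ?_
      · intro Q hQ'
        rw [Finset.mem_filter] at hQ'
        obtain ⟨hQP, hRQ⟩ := hQ'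
        have hQ := mem_allPartitions.1 hQP
        rw [Finset.mem_sigma]
        constructor
        · rw [Finset.mem_filter, mem_allPartitions]
          exact ⟨pmerge_isPartition hQ S, self_mem_pmerge⟩
        · have := blockOf_erase_mem hQ hRQ hiR
          rwa [hSR] at this
      · rintro ⟨Q', T⟩ hp
        rw [Finset.mem_sigma, Finset.mem_filter, mem_allPartitions] at hp
        obtain ⟨⟨hQ', hSQ'⟩, hT⟩ := hp
        have hiS : i ∈ S := hSR ▸ Finset.mem_insert_self i R
        rw [Finset.mem_filter, mem_allPartitions]
        refine ⟨moveTo_isPartition hQ' hSQ' hiS hT, ?_⟩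
        have := erase_mem_moveTo hSQ' hiS hT
        rwa [← hSR, Finset.erase_insert hiR] at this
      · intro Q hQ'
        rw [Finset.mem_filter] at hQ'
        obtain ⟨hQP, hRQ⟩ := hQ'
        have hQ := mem_allPartitions.1 hQP
        show moveTo (pmerge Q S) i ((blockOf Q i).erase i) = Q
        rw [← hSR]
        exact moveTo_pmerge hQ hRQ hiR
      · rintro ⟨Q', T⟩ hp
        rw [Finset.mem_sigma, Finset.mem_filter, mem_allPartitions] at hp
        obtain ⟨⟨hQ', hSQ'⟩, hT⟩ := hp
        have hiS : i ∈ S := hSR ▸ Finset.mem_insert_self i R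
        have hiT : i ∉ T :=
          hQ'.not_mem hSQ' (Finset.mem_of_mem_erase hT)
            (Ne.symm (Finset.ne_of_mem_erase hT)) hiS
        have h1 : pmerge (moveTo Q' i T) S = Q' := pmerge_moveTo hQ' hSQ' hiS hT
        have h2 : (blockOf (moveTo Q' i T) i).erase i = T := by
          rw [blockOf_moveTo hQ' hSQ' hiS hT, Finset.erase_insert hiT]
        simp only [h1, h2]
      · intro Q hQ'
        rw [Finset.mem_filter] at hQ'
        obtain ⟨hQP, hRQ⟩ := hQ'
        have hQ := mem_allPartitions.1 hQP
        have hmv : moveTo (pmerge Q S) i ((blockOf Q i).erase i) = Q := by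
          rw [← hSR]; exact moveTo_pmerge hQ hRQ hiR
        have h0Q : ∅ ∈ Q := hQ.1
        congr 1
        · rw [hmv]
        · refine Finset.prod_congr rfl fun j hj => ?_
          rw [Finset.mem_filter] at hj
          have hsub : S ⊆ Sset π ((j : ℕ) + 1) := by
            rw [hSdef]
            exact Sset_antitone π (by omega)
          rw [pmerge_pmerge h0Q hsub]
    rw [hbij, Finset.sum_sigma]
    have inner : ∀ Q' ∈ (allPartitions n).filter (fun Q' => S ∈ Q'),
        (∑ T ∈ Q'.erase S, (w i R (moveTo Q' i T) *
            ∏ j ∈ Finset.univ.filter fun j : Fin n => (j : ℕ) < k,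
              w (π j) (Sset π ((j : ℕ) + 1)) (pmerge Q' (Sset π ((j : ℕ) + 1)))))
        = ∏ j ∈ Finset.univ.filter fun j : Fin n => (j : ℕ) < k,
            w (π j) (Sset π ((j : ℕ) + 1)) (pmerge Q' (Sset π ((j : ℕ) + 1))) := by
      intro Q' hp
      rw [Finset.mem_filter, mem_allPartitions] at hp
      obtain ⟨hQ', hSQ'⟩ := hp
      have hiS : i ∈ S := hSR ▸ Finset.mem_insert_self i R
      rw [← Finset.sum_mul]
      have := hnorm i S Q' hQ' hSQ' hiS
      rw [← hSR, Finset.erase_insert hiR, hSR] at this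
      rw [this, one_mul]
    rw [Finset.sum_congr rfl inner]
    exact ihv

lemma sum_pr_eq_one (w : Weights n) (hnorm : Normalized w) (π : Equiv.Perm (Fin n)) :
    ∑ P ∈ allPartitions n, pr w π P = 1 := by
  have h := key_aux w hnorm π n le_rfl
  have hfil : (allPartitions n).filter (fun Q => Sset π n ∈ Q) = allPartitions n := by
    rw [Finset.filter_eq_self]
    intro Q hQ
    rw [Sset_top]
    exact (mem_allPartitions.1 hQ).1
  have hfil2 : (Finset.univ.filter fun j : Fin n => (j : ℕ) < n) = Finset.univ := by
    rw [Finset.filter_eq_self]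
    exact fun j _ => j.2
  rw [hfil, hfil2] at h
  rw [← h]
  refine Finset.sum_congr rfl fun P _ => ?_
  rw [pr, ← Equiv.prod_comp π
    (fun x => w x (Cafter π x) (pmerge P (Cafter π x)))]
  refine Finset.prod_congr rfl fun j _ => ?_
  rw [Cafter_eq]

end Key
/-- Efficiency of the extended Shapley value `φ^α`. -/
theorem stmt4 (n : ℕ) (w : Weights n) (hr : InRange w) (hnorm : Normalized w)
    (v : Game n) (hv0 : ∀ P, v ∅ P = 0) :
    ∑ i : Fin n, esv w v i = v Finset.univ (grandPart n) := by
  have hfac : (n.factorial : ℝ) ≠ 0 := Nat.cast_ne_zero.2 n.factorial_ne_zero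
  have hπ : ∀ π : Equiv.Perm (Fin n),
      (∑ P ∈ allPartitions n, ∑ i : Fin n,
        pr w π P * (v (insert i (Cafter π i)) (pmerge P (insert i (Cafter π i))) -
          v (Cafter π i) (pmerge P (Cafter π i))))
      = v Finset.univ (grandPart n) := by
    intro π
    have hper : ∀ P ∈ allPartitions n,
        (∑ i : Fin n, pr w π P *
          (v (insert i (Cafter π i)) (pmerge P (insert i (Cafter π i))) -
            v (Cafter π i) (pmerge P (Cafter π i))))
        = pr w π P * v Finset.univ (grandPart n) := by
      intro P hP
      have hPpart := mem_allPartitions.1 hP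
      rw [← Finset.mul_sum]
      congr 1
      rw [← Equiv.sum_comp π (fun i =>
        v (insert i (Cafter π i)) (pmerge P (insert i (Cafter π i))) -
          v (Cafter π i) (pmerge P (Cafter π i)))]
      have hterm : ∀ j : Fin n,
          (v (insert (π j) (Cafter π (π j))) (pmerge P (insert (π j) (Cafter π (π j)))) -
            v (Cafter π (π j)) (pmerge P (Cafter π (π j))))
          = (fun m => v (Sset π m) (pmerge P (Sset π m)) -
              v (Sset π (m + 1)) (pmerge P (Sset π (m + 1)))) (j : ℕ) := by
        intro j
        simp only
        rw [Cafter_eq, insert_Sset]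
      rw [Finset.sum_congr rfl (fun j _ => hterm j),
        Fin.sum_univ_eq_sum_range (fun m => v (Sset π m) (pmerge P (Sset π m)) -
          v (Sset π (m + 1)) (pmerge P (Sset π (m + 1)))) n,
        Finset.sum_range_sub' (fun m => v (Sset π m) (pmerge P (Sset π m)))]
      simp only [Sset_zero, Sset_top]
      rw [pmerge_univ hPpart.1, hv0]
      ring
    rw [Finset.sum_congr rfl hper, ← Finset.sum_mul, sum_pr_eq_one w hnorm π, one_mul]
  unfold esv
  rw [← Finset.mul_sum]
  rw [Finset.sum_comm]
  have hswap : ∀ π : Equiv.Perm (Fin n),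
      (∑ i : Fin n, ∑ P ∈ allPartitions n,
        pr w π P * (v (insert i (Cafter π i)) (pmerge P (insert i (Cafter π i))) -
          v (Cafter π i) (pmerge P (Cafter π i))))
      = v Finset.univ (grandPart n) := by
    intro π
    rw [Finset.sum_comm]
    exact hπ π
  rw [Finset.sum_congr rfl (fun π _ => hswap π), Finset.sum_const, Finset.card_univ,
    Fintype.card_perm, Fintype.card_fin, nsmul_eq_mul, ← mul_assoc,
    inv_mul_cancel₀ hfac, one_mul]
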